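/- Let A, B, x0, a be real numbers with 0 < A < B, a > C where C := B/A, and x0 ≥ 2. Suppose that the prime counting function π satisfies the Chebyshev-type inequalities A·x/log x < π(x) < B·x/log x for every real x > x0. Then for any pair of consecutive primes p < q (i.e., q is the smallest prime greater than p) with p > max(x0, a^{C/(a−C)}), one has q < a·p. -/

import Mathlib

/-- The prime counting function at a real argument: the number of primes `≤ x`. -/
noncomputable def primePi (x : ℝ) : ℕ := Nat.primeCounting ⌊x⌋₊

/-- `p` and `q` are consecutive primes: `q` is the smallest prime greater than `p`. -/
def ConsecutivePrimes (p q : ℕ) : Prop :=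
  p.Prime ∧ q.Prime ∧ p < q ∧ ∀ r : ℕ, r.Prime → p < r → q ≤ r

/-- The prime counting function is constant between a prime `p` and the next prime `q`. -/
lemma pi_const (p q n : ℕ) (hq : ∀ r : ℕ, r.Prime → p < r → q ≤ r)
    (h1 : p ≤ n) (h2 : n < q) : Nat.primeCounting n = Nat.primeCounting p := by
  unfold Nat.primeCounting Nat.primeCounting'
  rw [Nat.count_eq_card_filter_range, Nat.count_eq_card_filter_range]
  congr 1
  ext k
  simp only [Finset.mem_filter, Finset.mem_range]
  constructor
  · rintro ⟨hk, hkp⟩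
    refine ⟨?_, hkp⟩
    by_contra hlt
    push_neg at hlt
    have := hq k hkp (by omega)
    omega
  · rintro ⟨hk, hkp⟩
    exact ⟨by omega, hkp⟩

/-- Chebyshev-type bounds `A·x/log x < π(x) < B·x/log x` for `x > x0` imply that
consecutive primes `p < q` with `p > max(x0, a^(C/(a−C)))`, where `C = B/A`,
satisfy `q < a·p`. -/
theorem chebyshev_consecutive_prime_gap
    (A B x0 a : ℝ) (hA : 0 < A) (hAB : A < B) (ha : a > B / A) (hx0 : x0 ≥ 2)
    (hcheb : ∀ x : ℝ, x > x0 →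
      A * x / Real.log x < (primePi x : ℝ) ∧ (primePi x : ℝ) < B * x / Real.log x)
    (p q : ℕ) (hpq : ConsecutivePrimes p q)
    (hp : (p : ℝ) > max x0 (a ^ ((B / A) / (a - B / A)))) :
    (q : ℝ) < a * p := by
  by_contra hcon
  push_neg at hcon
  set C : ℝ := B / A with hC
  have hC1 : 1 < C := (one_lt_div hA).mpr hAB
  have ha1 : 1 < a := hC1.trans ha
  have hpx0 : (p : ℝ) > x0 := lt_of_le_of_lt (le_max_left _ _) hp
  have hp2 : (2 : ℝ) < p := lt_of_le_of_lt hx0 hpx0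
  have hppos : (0 : ℝ) < p := by linarith
  have hlp : 0 < Real.log p := Real.log_pos (by linarith)
  have hap : (p : ℝ) < a * p := by nlinarith
  have hla : Real.log p < Real.log (a * p) :=
    Real.log_lt_log hppos hap
  have hlogmul : Real.log (a * p) = Real.log a + Real.log p :=
    Real.log_mul (by linarith) (by positivity)
  have hloga : 0 < Real.log a := Real.log_pos ha1
  -- key inequality:  B*p/log p < A*(a*p)/log (a*p)
  have hpa : (p : ℝ) > a ^ (C / (a - C)) := lt_of_le_of_lt (le_max_right _ _) hp
  have hlpa : C / (a - C) * Real.log a < Real.log p := by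
    have := Real.log_lt_log (Real.rpow_pos_of_pos (by linarith : (0:ℝ) < a) _) hpa
    rwa [Real.log_rpow (by linarith)] at this
  have haC : 0 < a - C := by linarith
  have hkey0 : C * Real.log a < (a - C) * Real.log p := by
    rw [div_mul_eq_mul_div, div_lt_iff₀ haC] at hlpa
    linarith [hlpa]
  have hkey : B * p / Real.log p < A * (a * p) / Real.log (a * p) := by
    rw [div_lt_div_iff₀ hlp (by linarith)]
    have hB : B = A * C := by rw [hC, mul_div_assoc', eq_div_iff (ne_of_gt hA), mul_comm]
    rw [hB, hlogmul]
    nlinarith [mul_pos hppos hlp, mul_pos hA hppos]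
  -- find x with p < x < a*p, x0 < x, and B*p/log p < A*x/log x
  have hcont : ContinuousAt (fun x : ℝ => A * x / Real.log x) (a * p) := by
    exact ((continuousAt_id.const_mul A).div
      (Real.continuousAt_log (by positivity)) (ne_of_gt (by linarith : (0:ℝ) < Real.log (a * p))))
  have h1 : ∀ᶠ x in nhds (a * p), B * p / Real.log p < A * x / Real.log x :=
    hcont.eventually (eventually_gt_nhds hkey)
  have h2 : ∀ᶠ x in nhds (a * p), (p : ℝ) < x := eventually_gt_nhds hap
  have h3 : ∀ᶠ x in nhds (a * p), x0 < x := eventually_gt_nhds (by linarith)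
  have h4 : ∀ᶠ x in nhdsWithin (a * p) (Set.Iio (a * p)),
      (B * p / Real.log p < A * x / Real.log x ∧ (p : ℝ) < x ∧ x0 < x) ∧ x < a * p := by
    refine Filter.Eventually.and ?_ ?_
    · exact ((h1.and (h2.and h3)).filter_mono nhdsWithin_le_nhds)
    · exact eventually_mem_nhdsWithin.mono (fun x hx => hx)
  obtain ⟨x, ⟨hxgt, hxp, hxx0⟩, hxap⟩ := h4.exists
  -- primePi x = primePi p
  have hfloorge : p ≤ ⌊x⌋₊ := Nat.le_floor hxp.le
  have hfloorlt : ⌊x⌋₊ < q := by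
    have h1 : (⌊x⌋₊ : ℝ) ≤ x := Nat.floor_le (by linarith)
    have : (⌊x⌋₊ : ℝ) < q := by linarith
    exact_mod_cast this
  have hpix : primePi x = primePi p := by
    unfold primePi
    rw [Nat.floor_natCast]
    exact pi_const p q ⌊x⌋₊ hpq.2.2.2 hfloorge hfloorlt
  have hchx := (hcheb x hxx0).1
  have hchp := (hcheb p hpx0).2
  have hpip : primePi p = Nat.primeCounting p := by
    unfold primePi; rw [Nat.floor_natCast]
  rw [hpix] at hchx
  linarith
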